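/- For all a < b in Fin n, the (b−a+1)-st power of the matrix M_q(t_{b,a}) is the diagonal matrix whose diagonal entry at τ ∈ S_n equals σ_T, where T = {τ(a), τ(a+1), …, τ(b)} is the image under τ of the interval [a,b]. -/

import Mathlib

/-- The square complex matrices indexed by the symmetric group `Equiv.Perm (Fin n)`. -/
abbrev PermMatrix (n : ℕ) := Matrix (Equiv.Perm (Fin n)) (Equiv.Perm (Fin n)) ℂ

/-- The set of inversions `I(g) = {(a,b) : a < b and g(a) > g(b)}` of a permutation. -/
def invSet {n : ℕ} (g : Equiv.Perm (Fin n)) : Finset (Fin n × Fin n) :=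
  Finset.univ.filter fun p => p.1 < p.2 ∧ g p.2 < g p.1

/-- The matrix `M_q(g)`, with `(σ,τ)`-entry `∏_{(a,b) ∈ I(g)} q (τ b) (τ a)`
if `σ = τ ∘ g⁻¹` and `0` otherwise. -/
def twistMat (n : ℕ) (q : Fin n → Fin n → ℂ) (g : Equiv.Perm (Fin n)) : PermMatrix n :=
  fun σ τ => if σ = τ * g⁻¹ then ∏ p ∈ invSet g, q (τ p.2) (τ p.1) else 0

/-- `IsTCycle a b s` says that `s` is the cycle `t_{b,a}` (for `a ≤ b`):
`s i = i + 1` for `a ≤ i ≤ b - 1`, `s b = a`, and `s i = i` otherwise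
(in particular `t_{b,b} = id`). -/
def IsTCycle {n : ℕ} (a b : Fin n) (s : Equiv.Perm (Fin n)) : Prop :=
  (∀ i : Fin n, a ≤ i → i < b → (s i : ℕ) = (i : ℕ) + 1) ∧ s b = a ∧
    ∀ i : Fin n, ¬(a ≤ i ∧ i ≤ b) → s i = i

/-- `σ_T = ∏_{i,j ∈ T, i ≠ j} q i j`, the product over all ordered pairs of distinct
elements of `T`. -/
def sigmaT {n : ℕ} (q : Fin n → Fin n → ℂ) (T : Finset (Fin n)) : ℂ :=
  ∏ p ∈ (T ×ˢ T).filter fun p => p.1 ≠ p.2, q p.1 p.2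

theorem perm_apply_inv_self' {α : Type*} (f : Equiv.Perm α) (x : α) : f (f⁻¹ x) = x :=
  Equiv.apply_symm_apply f x

theorem perm_inv_apply_self' {α : Type*} (f : Equiv.Perm α) (x : α) : f⁻¹ (f x) = x :=
  Equiv.symm_apply_apply f x

section Helpers

variable {n : ℕ} {a b : Fin n} {s : Equiv.Perm (Fin n)}

lemma tc_mem (hs : IsTCycle a b s) (hab : a ≤ b) {i : Fin n}
    (hi : i ∈ Finset.Icc a b) : s i ∈ Finset.Icc a b := by
  simp only [Finset.mem_Icc] at hi ⊢
  rcases eq_or_lt_of_le hi.2 with h | h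
  · rw [h, hs.2.1]; exact ⟨le_refl a, hab⟩
  · have h1 := Fin.le_def.mp hi.1
    have h2 := Fin.lt_def.mp h
    have h3 := hs.1 i hi.1 h
    exact ⟨Fin.le_def.mpr (by omega), Fin.le_def.mpr (by omega)⟩

lemma tc_inv_mem (hs : IsTCycle a b s) {i : Fin n}
    (hi : i ∈ Finset.Icc a b) : s⁻¹ i ∈ Finset.Icc a b := by
  by_contra h
  have h2 := hs.2.2 (s⁻¹ i) (by simpa [Finset.mem_Icc] using h)
  rw [perm_apply_inv_self'] at h2
  rw [← h2] at h
  simp only [Finset.mem_Icc] at h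
  exact h (Finset.mem_Icc.mp hi)

lemma tc_invpow_mem (hs : IsTCycle a b s) (j : ℕ) {i : Fin n}
    (hi : i ∈ Finset.Icc a b) : ((s⁻¹) ^ j) i ∈ Finset.Icc a b := by
  induction j with
  | zero => simpa using hi
  | succ m ih =>
    rw [pow_succ', Equiv.Perm.mul_apply]
    exact tc_inv_mem hs ih

lemma tc_pow_mem (hs : IsTCycle a b s) (hab : a ≤ b) (j : ℕ) {i : Fin n}
    (hi : i ∈ Finset.Icc a b) : (s ^ j) i ∈ Finset.Icc a b := by
  induction j with
  | zero => simpa using hi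
  | succ m ih =>
    rw [pow_succ', Equiv.Perm.mul_apply]
    exact tc_mem hs hab ih

lemma tc_pow_val (hs : IsTCycle a b s) (j : ℕ) :
    ∀ i : Fin n, a ≤ i → (i : ℕ) + j ≤ (b : ℕ) → ((s ^ j) i : ℕ) = (i : ℕ) + j := by
  induction j with
  | zero => intro i _ _; simp
  | succ m ih =>
    intro i hai hib
    have hm := ih i hai (by omega)
    have hmem : a ≤ (s ^ m) i := Fin.le_def.mpr (by have := Fin.le_def.mp hai; omega)
    have hlt : (s ^ m) i < b := Fin.lt_def.mpr (by omega)
    rw [pow_succ', Equiv.Perm.mul_apply, hs.1 _ hmem hlt, hm]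
    omega

lemma tc_invpow_b_val (hs : IsTCycle a b s) (hab : a ≤ b) {j : ℕ}
    (hj : j ≤ (b : ℕ) - (a : ℕ)) : (((s⁻¹) ^ j) b : ℕ) = (b : ℕ) - j := by
  have hab' := Fin.le_def.mp hab
  have hb : (b : ℕ) - j < n := by omega
  set i : Fin n := ⟨(b : ℕ) - j, by omega⟩ with hi
  have h1 : (s ^ j) i = b := by
    have := tc_pow_val hs j i (Fin.le_def.mpr (by simp [hi]; omega)) (by simp [hi]; omega)
    exact Fin.ext (by simp [hi] at this ⊢; omega)
  have : ((s ^ j)⁻¹) b = i := by rw [← h1, perm_inv_apply_self']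
  rw [← inv_pow] at this
  rw [this]

lemma tc_pow_k (hs : IsTCycle a b s) (hab : a ≤ b) :
    s ^ ((b : ℕ) - (a : ℕ) + 1) = 1 := by
  have hab' := Fin.le_def.mp hab
  ext i
  simp only [Equiv.Perm.coe_one, id_eq, Equiv.Perm.coe_mul, Function.comp_apply]
  by_cases hi : a ≤ i ∧ i ≤ b
  · have hai := Fin.le_def.mp hi.1
    have hib := Fin.le_def.mp hi.2
    have hk : (b : ℕ) - (a : ℕ) + 1 = ((i : ℕ) - (a : ℕ)) + (1 + ((b : ℕ) - (i : ℕ))) := by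
      omega
    rw [hk, pow_add, pow_add, Equiv.Perm.mul_apply, Equiv.Perm.mul_apply, pow_one]
    have h1 : (s ^ ((b : ℕ) - (i : ℕ))) i = b := by
      have := tc_pow_val hs ((b : ℕ) - (i : ℕ)) i hi.1 (by omega)
      exact Fin.ext (by omega)
    rw [h1, hs.2.1]
    have := tc_pow_val hs ((i : ℕ) - (a : ℕ)) a (le_refl a) (by omega)
    omega
  · exact congrArg Fin.val
      (Equiv.Perm.pow_apply_eq_self_of_apply_eq_self (hs.2.2 i hi) _)

lemma tc_invSet (hs : IsTCycle a b s) (hab : a < b) :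
    invSet s = (Finset.Ico a b).image (fun x => (x, b)) := by
  have hab' := Fin.lt_def.mp hab
  ext p
  simp only [invSet, Finset.mem_filter, Finset.mem_univ, true_and, Finset.mem_image,
    Finset.mem_Ico, Prod.ext_iff]
  constructor
  · rintro ⟨h1, h2⟩
    have hval : ∀ i : Fin n, (s i : ℕ) =
        if a ≤ i ∧ i < b then (i : ℕ) + 1 else if i = b then (a : ℕ) else (i : ℕ) := by
      intro i
      split_ifs with hc hc2
      · exact hs.1 i hc.1 hc.2
      · rw [hc2, hs.2.1]
      · rw [hs.2.2 i]
        intro ⟨ha, hb⟩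
        rcases eq_or_lt_of_le hb with h | h
        · exact hc2 h
        · exact hc ⟨ha, h⟩
    have v1 := hval p.1
    have v2 := hval p.2
    have h1' := Fin.lt_def.mp h1
    have h2' := Fin.lt_def.mp h2
    -- unfold the Fin le/lt in the ifs
    simp only [Fin.le_def, Fin.lt_def, Fin.ext_iff] at v1 v2
    have key : (p.2 : ℕ) = (b : ℕ) ∧ (a : ℕ) ≤ (p.1 : ℕ) ∧ (p.1 : ℕ) < (b : ℕ) := by
      split_ifs at v1 v2 <;> omega
    exact ⟨p.1, ⟨Fin.le_def.mpr key.2.1, Fin.lt_def.mpr key.2.2⟩, rfl, Fin.ext key.1.symm⟩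
  · rintro ⟨x, ⟨hax, hxb⟩, h1, h2⟩
    subst h1; subst h2
    have hax' := Fin.le_def.mp hax
    have hxb' := Fin.lt_def.mp hxb
    have vx := hs.1 _ hax hxb
    refine ⟨hxb, ?_⟩
    rw [hs.2.1, Fin.lt_def]
    omega

end Helpers

lemma twistMat_pow_apply (n : ℕ) (q : Fin n → Fin n → ℂ) (s : Equiv.Perm (Fin n))
    (m : ℕ) (σ τ : Equiv.Perm (Fin n)) :
    (twistMat n q s ^ m) σ τ =
      if σ = τ * (s⁻¹) ^ m then
        ∏ j ∈ Finset.range m, ∏ p ∈ invSet s,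
          q ((τ * (s⁻¹) ^ j) p.2) ((τ * (s⁻¹) ^ j) p.1)
      else 0 := by
  induction m generalizing τ with
  | zero => simp [Matrix.one_apply]
  | succ m ih =>
    rw [pow_succ, Matrix.mul_apply]
    have hsum : ∀ ρ : Equiv.Perm (Fin n),
        (twistMat n q s ^ m) σ ρ * twistMat n q s ρ τ =
          if ρ = τ * s⁻¹ then
            (twistMat n q s ^ m) σ (τ * s⁻¹) * ∏ p ∈ invSet s, q (τ p.2) (τ p.1)
          else 0 := by
      intro ρ
      simp only [twistMat]
      split_ifs with h
      · rw [h]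
      · rw [mul_zero]
    rw [Finset.sum_congr rfl (fun ρ _ => hsum ρ), Finset.sum_ite_eq' Finset.univ,
      if_pos (Finset.mem_univ _), ih]
    have hcond : (σ = τ * s⁻¹ * (s⁻¹) ^ m) ↔ (σ = τ * (s⁻¹) ^ (m + 1)) := by
      rw [pow_succ', ← mul_assoc]
    split_ifs with h1 h2 h2
    · rw [Finset.prod_range_succ']
      simp only [pow_zero, mul_one]
      congr 1
      apply Finset.prod_congr rfl
      intro j _
      have : τ * s⁻¹ * (s⁻¹) ^ j = τ * (s⁻¹) ^ (j + 1) := by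
        rw [pow_succ', ← mul_assoc]
      rw [this]
    · exact absurd (hcond.mp h1) h2
    · exact absurd (hcond.mpr h2) h1
    · rw [zero_mul]
/-- For `a < b` in `Fin n`, the `(b−a+1)`-st power of `M_q(t_{b,a})` is the diagonal
matrix whose diagonal entry at `τ` equals `σ_T`, where `T = τ([a,b])` is the image
under `τ` of the interval `[a,b]`. -/
theorem twistMat_pow_cycle (n : ℕ) (hn : 1 ≤ n) (q : Fin n → Fin n → ℂ)
    (a b : Fin n) (hab : a < b) (s : Equiv.Perm (Fin n)) (hs : IsTCycle a b s) :
    twistMat n q s ^ ((b : ℕ) - (a : ℕ) + 1) =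
      Matrix.diagonal fun τ : Equiv.Perm (Fin n) =>
        sigmaT q ((Finset.Icc a b).image τ) := by
  have hab' := Fin.lt_def.mp hab
  have hable : a ≤ b := le_of_lt hab
  set k := (b : ℕ) - (a : ℕ) + 1 with hk
  ext σ τ
  rw [twistMat_pow_apply]
  have hsk : (s⁻¹) ^ k = 1 := by rw [inv_pow, tc_pow_k hs hable, inv_one]
  rw [hsk, mul_one, Matrix.diagonal_apply]
  split_ifs with h
  · subst h
    rw [tc_invSet hs hab]
    have hinj : Set.InjOn (fun x : Fin n => (x, b)) (Finset.Ico a b) :=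
      fun x _ y _ h => (Prod.ext_iff.mp h).1
    have hin : ∀ j ∈ Finset.range k,
        (∏ p ∈ (Finset.Ico a b).image (fun x => (x, b)),
          q ((σ * (s⁻¹) ^ j) p.2) ((σ * (s⁻¹) ^ j) p.1)) =
        ∏ x ∈ Finset.Ico a b, q (σ (((s⁻¹) ^ j) b)) (σ (((s⁻¹) ^ j) x)) := by
      intro j _
      rw [Finset.prod_image hinj]
      simp [Equiv.Perm.mul_apply]
    rw [Finset.prod_congr rfl hin, ← Finset.prod_product']
    unfold sigmaT
    have hbmem : b ∈ Finset.Icc a b := Finset.mem_Icc.mpr ⟨hable, le_refl b⟩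
    have hmemT : ∀ u ∈ (Finset.Icc a b).image σ, σ⁻¹ u ∈ Finset.Icc a b := by
      intro u hu
      obtain ⟨i, hi, rfl⟩ := Finset.mem_image.mp hu
      rwa [perm_inv_apply_self']
    refine Finset.prod_nbij' (fun p => (σ (((s⁻¹) ^ p.1) b), σ (((s⁻¹) ^ p.1) p.2)))
      (fun p => ((b : ℕ) - ((σ⁻¹ p.1 : Fin n) : ℕ),
        (s ^ ((b : ℕ) - ((σ⁻¹ p.1 : Fin n) : ℕ))) (σ⁻¹ p.2)))
      ?_ ?_ ?_ ?_ ?_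
    · rintro ⟨j, x⟩ hp
      simp only [Finset.mem_product, Finset.mem_range, Finset.mem_Ico] at hp
      obtain ⟨hj, hax, hxb⟩ := hp
      simp only [Finset.mem_filter, Finset.mem_product, Finset.mem_image]
      refine ⟨⟨⟨_, tc_invpow_mem hs j hbmem, rfl⟩,
        ⟨_, tc_invpow_mem hs j (Finset.mem_Icc.mpr ⟨hax, le_of_lt hxb⟩), rfl⟩⟩, ?_⟩
      simp only [ne_eq, EmbeddingLike.apply_eq_iff_eq]
      exact fun he => (ne_of_lt hxb) he.symm
    · rintro ⟨u, v⟩ hp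
      simp only [Finset.mem_filter, Finset.mem_product] at hp
      obtain ⟨⟨hu, hv⟩, huv⟩ := hp
      have hu' := Finset.mem_Icc.mp (hmemT u hu)
      have hv' := Finset.mem_Icc.mp (hmemT v hv)
      have hau := Fin.le_def.mp hu'.1
      have hub := Fin.le_def.mp hu'.2
      simp only [Finset.mem_product, Finset.mem_range, Finset.mem_Ico]
      set j := (b : ℕ) - ((σ⁻¹ u : Fin n) : ℕ) with hj
      refine ⟨by omega, ?_, ?_⟩
      · exact (Finset.mem_Icc.mp (tc_pow_mem hs hable j (hmemT v hv))).1
      · have hle : (s ^ j) (σ⁻¹ v) ≤ b :=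
          (Finset.mem_Icc.mp (tc_pow_mem hs hable j (hmemT v hv))).2
        refine lt_of_le_of_ne hle ?_
        intro heq
        have hinvb : ((s⁻¹) ^ j) b = σ⁻¹ u := by
          apply Fin.ext
          rw [tc_invpow_b_val hs hable (by omega)]
          omega
        have : σ⁻¹ v = ((s⁻¹) ^ j) b := by
          rw [← heq, inv_pow, perm_inv_apply_self']
        rw [hinvb] at this
        exact huv (by rw [← perm_apply_inv_self' σ u, ← perm_apply_inv_self' σ v, this])
    · rintro ⟨j, x⟩ hp
      simp only [Finset.mem_product, Finset.mem_range, Finset.mem_Ico] at hp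
      obtain ⟨hj, hax, hxb⟩ := hp
      simp only [perm_inv_apply_self']
      have hval : (((s⁻¹) ^ j) b : ℕ) = (b : ℕ) - j := tc_invpow_b_val hs hable (by omega)
      have hjj : (b : ℕ) - ((((s⁻¹) ^ j) b : Fin n) : ℕ) = j := by omega
      rw [hjj]
      refine Prod.ext rfl ?_
      simp only
      rw [inv_pow]
      exact perm_apply_inv_self' _ _
    · rintro ⟨u, v⟩ hp
      simp only [Finset.mem_filter, Finset.mem_product] at hp
      obtain ⟨⟨hu, hv⟩, huv⟩ := hp
      have hu' := Finset.mem_Icc.mp (hmemT u hu)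
      have hau := Fin.le_def.mp hu'.1
      have hub := Fin.le_def.mp hu'.2
      have hinvb : ((s⁻¹) ^ ((b : ℕ) - ((σ⁻¹ u : Fin n) : ℕ))) b = σ⁻¹ u := by
        apply Fin.ext
        rw [tc_invpow_b_val hs hable (by omega)]
        omega
      simp only
      rw [hinvb, perm_apply_inv_self', inv_pow, perm_inv_apply_self',
        perm_apply_inv_self']
    · rintro ⟨j, x⟩ _
      rfl
  · rfl
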